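/- The empirical-measure MMD with energy kernel between two finite scenario sets {ζ_1,…,ζ_K} and {ω_1,…,ω_M} in ℝ^p is nonnegative: (2/(KM))∑_{i,j}‖ζ_i − ω_j‖ − (1/K²)∑_{i,i'}‖ζ_i − ζ_{i'}‖ − (1/M²)∑_{j,j'}‖ω_j − ω_{j'}‖ ≥ 0, with equality if and only if the empirical measures (1/K)∑_i δ_{ζ_i} and (1/M)∑_j δ_{ω_j} coincide. -/

import Mathlib

open MeasureTheory

open Finset Set
open scoped ENNReal

noncomputable section EnergyAux

lemma gram_pow_nonneg {p n : ℕ} (x : Fin n → EuclideanSpace ℝ (Fin p)) (b : Fin n → ℝ) (m : ℕ) :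
    0 ≤ ∑ i, ∑ j, b i * b j * (inner ℝ (x i) (x j) : ℝ) ^ m := by
  set P : Fin n → (Fin m → Fin p) → ℝ := fun i k => b i * ∏ t, x i (k t) with hP
  have h : ∀ i j : Fin n, b i * b j * (inner ℝ (x i) (x j) : ℝ) ^ m
      = ∑ k : Fin m → Fin p, P i k * P j k := by
    intro i j
    have : (inner ℝ (x i) (x j) : ℝ) ^ m
        = ∑ k : Fin m → Fin p, ∏ t, (x i (k t) * x j (k t)) := by
      rw [PiLp.inner_apply]
      simp only [RCLike.inner_apply, conj_trivial]
      rw [← Fin.prod_const m (∑ c, x j c * x i c), Finset.prod_univ_sum]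
      simp [mul_comm]
    rw [this, Finset.mul_sum]
    refine Finset.sum_congr rfl fun k _ => ?_
    rw [hP]
    simp only []
    rw [Finset.prod_mul_distrib]
    ring
  calc (0:ℝ) ≤ ∑ k : Fin m → Fin p, (∑ i, P i k) ^ 2 :=
        Finset.sum_nonneg fun k _ => sq_nonneg _
    _ = ∑ i, ∑ j, b i * b j * (inner ℝ (x i) (x j) : ℝ) ^ m := by
        simp only [h]
        refine (Finset.sum_congr rfl fun k (_ : k ∈ Finset.univ) => by rw [sq, Finset.sum_mul_sum]).trans ?_
        rw [Finset.sum_comm]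
        exact Finset.sum_congr rfl fun i _ => Finset.sum_comm

lemma gauss_pd {p n : ℕ} (x : Fin n → EuclideanSpace ℝ (Fin p)) (a : Fin n → ℝ)
    {s : ℝ} (hs : 0 ≤ s) :
    0 ≤ ∑ i, ∑ j, a i * a j * Real.exp (-(s * ‖x i - x j‖ ^ 2)) := by
  set b : Fin n → ℝ := fun i => a i * Real.exp (-(s * ‖x i‖ ^ 2)) with hb
  have key : ∀ i j : Fin n, a i * a j * Real.exp (-(s * ‖x i - x j‖ ^ 2))
      = b i * b j * Real.exp (2 * s * (inner ℝ (x i) (x j) : ℝ)) := by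
    intro i j
    have hnorm : ‖x i - x j‖ ^ 2 = ‖x i‖ ^ 2 - 2 * (inner ℝ (x i) (x j) : ℝ) + ‖x j‖ ^ 2 :=
      @norm_sub_sq_real _ _ _ (x i) (x j)
    rw [hb]
    simp only []
    rw [hnorm]
    rw [show -(s * (‖x i‖ ^ 2 - 2 * (inner ℝ (x i) (x j) : ℝ) + ‖x j‖ ^ 2))
        = -(s * ‖x i‖ ^ 2) + -(s * ‖x j‖ ^ 2) + 2 * s * (inner ℝ (x i) (x j) : ℝ) by ring]
    rw [Real.exp_add, Real.exp_add]
    ring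
  simp only [key]
  have hexp : ∀ i j : Fin n, b i * b j * Real.exp (2 * s * (inner ℝ (x i) (x j) : ℝ))
      = ∑' m : ℕ, b i * b j * ((2 * s) ^ m / m.factorial * (inner ℝ (x i) (x j) : ℝ) ^ m) := by
    intro i j
    rw [Real.exp_eq_exp_ℝ, NormedSpace.exp_eq_tsum_div, ← tsum_mul_left]
    refine tsum_congr fun m => ?_
    rw [mul_pow]
    ring
  have hsummable : ∀ i j : Fin n,
      Summable (fun m : ℕ => b i * b j * ((2 * s) ^ m / m.factorial * (inner ℝ (x i) (x j) : ℝ) ^ m)) := by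
    intro i j
    apply Summable.mul_left
    have := Real.summable_pow_div_factorial (2 * s * (inner ℝ (x i) (x j) : ℝ))
    apply this.congr
    intro m
    rw [mul_pow]
    ring
  calc (0:ℝ) ≤ ∑' m : ℕ, ∑ i, ∑ j,
        b i * b j * ((2 * s) ^ m / m.factorial * (inner ℝ (x i) (x j) : ℝ) ^ m) := by
        apply tsum_nonneg
        intro m
        have : ∀ i j : Fin n, b i * b j * ((2 * s) ^ m / m.factorial * (inner ℝ (x i) (x j) : ℝ) ^ m)
            = (2 * s) ^ m / m.factorial * (b i * b j * (inner ℝ (x i) (x j) : ℝ) ^ m) := by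
          intro i j; ring
        simp only [this, ← Finset.mul_sum]
        exact mul_nonneg (by positivity) (gram_pow_nonneg x b m)
    _ = ∑ i, ∑ j, b i * b j * Real.exp (2 * s * (inner ℝ (x i) (x j) : ℝ)) := by
        have h1 : ∀ i : Fin n, Summable (fun m : ℕ => ∑ j, b i * b j *
            ((2 * s) ^ m / m.factorial * (inner ℝ (x i) (x j) : ℝ) ^ m)) := by
          intro i
          exact summable_sum (fun j _ => hsummable i j)
        rw [Summable.tsum_finsetSum (fun i (_ : i ∈ Finset.univ) => h1 i)]
        refine Finset.sum_congr rfl fun i _ => ?_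
        rw [Summable.tsum_finsetSum (fun j (_ : j ∈ Finset.univ) => hsummable i j)]
        exact Finset.sum_congr rfl fun j _ => (hexp i j).symm

def psiE : ℝ → ℝ := fun s => (1 - Real.exp (-s)) * s ^ (-(3:ℝ)/2)

lemma psiE_nonneg {s : ℝ} (hs : 0 < s) : 0 ≤ psiE s := by
  unfold psiE
  apply mul_nonneg
  · have : Real.exp (-s) ≤ 1 := Real.exp_le_one_iff.mpr (by linarith)
    linarith
  · positivity

lemma psiE_integrable : IntegrableOn psiE (Ioi (0:ℝ)) := by
  have hmeas : AEStronglyMeasurable psiE (volume.restrict (Ioi (0:ℝ))) := by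
    apply Measurable.aestronglyMeasurable
    unfold psiE
    fun_prop
  have h1 : IntegrableOn psiE (Ioc (0:ℝ) 1) := by
    have hg : IntegrableOn (fun s : ℝ => s ^ (-(1:ℝ)/2)) (Ioc (0:ℝ) 1) := by
      have := intervalIntegral.intervalIntegrable_rpow' (a := 0) (b := 1)
        (r := -(1:ℝ)/2) (by norm_num)
      rwa [intervalIntegrable_iff_integrableOn_Ioc_of_le (by norm_num)] at this
    refine Integrable.mono' hg (hmeas.mono_set Ioc_subset_Ioi_self) ?_
    filter_upwards [ae_restrict_mem measurableSet_Ioc] with s hs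
    rcases hs with ⟨hs0, hs1⟩
    rw [Real.norm_of_nonneg (psiE_nonneg hs0)]
    unfold psiE
    have h1e : 1 - Real.exp (-s) ≤ s := by
      have := Real.add_one_le_exp (-s)
      linarith
    calc (1 - Real.exp (-s)) * s ^ (-(3:ℝ)/2) ≤ s * s ^ (-(3:ℝ)/2) := by
          apply mul_le_mul_of_nonneg_right h1e (by positivity)
      _ = s ^ (-(1:ℝ)/2) := by
          rw [show s * s ^ (-(3:ℝ)/2) = s ^ (1:ℝ) * s ^ (-(3:ℝ)/2) by rw [Real.rpow_one],
            ← Real.rpow_add hs0]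
          norm_num
  have h2 : IntegrableOn psiE (Ioi (1:ℝ)) := by
    have hg : IntegrableOn (fun s : ℝ => s ^ (-(3:ℝ)/2)) (Ioi (1:ℝ)) := by
      have := integrableOn_Ioi_rpow_of_lt (a := -(3:ℝ)/2) (by norm_num) (c := 1) one_pos
      exact this
    refine Integrable.mono' hg (hmeas.mono_set (Ioi_subset_Ioi (by norm_num))) ?_
    filter_upwards [ae_restrict_mem measurableSet_Ioi] with s hs
    have hs0 : (0:ℝ) < s := lt_trans one_pos hs
    rw [Real.norm_of_nonneg (psiE_nonneg hs0)]
    unfold psiE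
    have : 1 - Real.exp (-s) ≤ 1 := by
      have := Real.exp_pos (-s); linarith
    calc (1 - Real.exp (-s)) * s ^ (-(3:ℝ)/2) ≤ 1 * s ^ (-(3:ℝ)/2) :=
          mul_le_mul_of_nonneg_right this (by positivity)
      _ = s ^ (-(3:ℝ)/2) := one_mul _
  have := h1.union h2
  rwa [Ioc_union_Ioi_eq_Ioi (by norm_num : (0:ℝ) ≤ 1)] at this

def aE : ℝ := ∫ s in Ioi (0:ℝ), psiE s

lemma aE_pos : 0 < aE := by
  unfold aE
  rw [integral_pos_iff_support_of_nonneg_ae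
    (by filter_upwards [ae_restrict_mem measurableSet_Ioi] with s hs using psiE_nonneg hs)
    psiE_integrable]
  have hsub : Ioi (0:ℝ) ⊆ Function.support psiE := by
    intro s hs
    have h0 : (0:ℝ) < s := hs
    have hpos : 0 < psiE s := by
      unfold psiE
      apply mul_pos
      · have : Real.exp (-s) < 1 := Real.exp_lt_one_iff.mpr (by linarith)
        linarith
      · positivity
    exact fun h => hpos.ne' h
  calc (0:ℝ≥0∞) < volume (Ioi (0:ℝ)) := by simp [Real.volume_Ioi]
    _ = (volume.restrict (Ioi (0:ℝ))) (Ioi (0:ℝ)) := by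
        rw [Measure.restrict_apply measurableSet_Ioi, inter_self]
    _ ≤ (volume.restrict (Ioi (0:ℝ))) (Function.support psiE) := measure_mono hsub

lemma rep_aux {d : ℝ} (hd : 0 < d) :
    IntegrableOn (fun s : ℝ => (1 - Real.exp (-(s * d ^ 2))) * s ^ (-(3:ℝ)/2)) (Ioi 0) ∧
    ∫ s in Ioi (0:ℝ), (1 - Real.exp (-(s * d ^ 2))) * s ^ (-(3:ℝ)/2) = aE * d := by
  set c : ℝ := d ^ 2 with hc
  have hc0 : 0 < c := by positivity
  have hcomp : IntegrableOn (fun s : ℝ => psiE (c * s)) (Ioi 0) := by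
    have := (integrableOn_Ioi_comp_mul_left_iff psiE 0 hc0).mpr
    simp only [mul_zero] at this
    exact this psiE_integrable
  have hcongr : ∀ s ∈ Ioi (0:ℝ),
      (1 - Real.exp (-(s * c))) * s ^ (-(3:ℝ)/2) = c ^ ((3:ℝ)/2) * psiE (c * s) := by
    intro s hs
    have hs0 : (0:ℝ) < s := hs
    unfold psiE
    rw [Real.mul_rpow hc0.le hs0.le]
    rw [show -(c * s) = -(s * c) by ring]
    rw [show c ^ (-(3:ℝ)/2) = (c ^ ((3:ℝ)/2))⁻¹ by
      rw [← Real.rpow_neg hc0.le]; norm_num]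
    field_simp
  constructor
  · refine (IntegrableOn.congr_fun ?_ (fun s hs => (hcongr s hs).symm) measurableSet_Ioi)
    exact hcomp.const_mul _
  · rw [setIntegral_congr_fun measurableSet_Ioi hcongr, integral_const_mul,
      integral_comp_mul_left_Ioi psiE 0 hc0]
    simp only [mul_zero, smul_eq_mul]
    rw [show (∫ s in Ioi (0:ℝ), psiE s) = aE from rfl]
    have h32 : c ^ ((3:ℝ)/2) = d ^ 3 := by
      rw [hc, ← Real.rpow_natCast d 2, ← Real.rpow_mul hd.le, ← Real.rpow_natCast d 3]
      norm_num
    rw [h32, hc]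
    have hd' : d ≠ 0 := hd.ne'
    field_simp

lemma rep {d : ℝ} (hd : 0 ≤ d) :
    IntegrableOn (fun s : ℝ => (1 - Real.exp (-(s * d ^ 2))) * s ^ (-(3:ℝ)/2)) (Ioi 0) ∧
    ∫ s in Ioi (0:ℝ), (1 - Real.exp (-(s * d ^ 2))) * s ^ (-(3:ℝ)/2) = aE * d := by
  rcases eq_or_lt_of_le hd with h | h
  · refine ⟨?_, ?_⟩ <;> simp [← h]
  · exact rep_aux h

lemma exp_vanish {ι : Type*} [Fintype ι] [DecidableEq ι] (c w : ι → ℝ)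
    (hF : ∀ s : ℝ, 0 < s → ∑ q, w q * Real.exp (-(s * c q)) = 0) (δ : ℝ) :
    ∑ q ∈ univ.filter (fun q => c q = δ), w q = 0 := by
  classical
  set D : Finset ℝ := univ.image c with hD
  by_cases hδ : δ ∈ D
  swap
  · rw [Finset.filter_false_of_mem, Finset.sum_empty]
    intro q _ hq
    exact hδ (by rw [hD, ← hq]; exact Finset.mem_image_of_mem c (mem_univ q))
  set m := D.card with hm
  set e : {r // r ∈ D} ≃ Fin m := D.equivFin with he
  set b : ℝ → ℝ := fun r => ∑ q ∈ univ.filter (fun q => c q = r), w q with hb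
  have hgroup : ∀ s : ℝ, ∑ q, w q * Real.exp (-(s * c q))
      = ∑ r ∈ D, b r * Real.exp (-(s * r)) := by
    intro s
    rw [← Finset.sum_fiberwise_of_maps_to
      (fun q _ => Finset.mem_image_of_mem c (mem_univ q)) (fun q => w q * Real.exp (-(s * c q)))]
    refine Finset.sum_congr rfl fun r _ => ?_
    rw [hb, Finset.sum_mul]
    refine Finset.sum_congr rfl fun q hq => ?_
    rw [(Finset.mem_filter.mp hq).2]
  set f : Fin m → ℝ := fun k => Real.exp (-(e.symm k : ℝ)) with hf
  set v : Fin m → ℝ := fun k => b (e.symm k : ℝ) * f k with hv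
  have hfinj : Function.Injective f := by
    intro k₁ k₂ hk
    have := Real.exp_injective hk
    have : ((e.symm k₁ : {r // r ∈ D}) : ℝ) = ((e.symm k₂ : {r // r ∈ D}) : ℝ) := by linarith
    exact e.symm.injective (Subtype.ext this)
  have hvzero : v = 0 := by
    apply Matrix.eq_zero_of_forall_pow_sum_mul_pow_eq_zero hfinj
    intro i
    have key : ∑ k : Fin m, v k * f k ^ (i : ℕ)
        = ∑ r ∈ D, b r * Real.exp (-(((i : ℕ) + 1 : ℝ) * r)) := by
      rw [← Finset.sum_coe_sort D (fun r => b r * Real.exp (-(((i : ℕ) + 1 : ℝ) * r))),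
        ← Equiv.sum_comp e.symm
          (fun r : {r // r ∈ D} => b r * Real.exp (-(((i : ℕ) + 1 : ℝ) * (r : ℝ))))]
      refine Finset.sum_congr rfl fun k _ => ?_
      rw [hv, hf]
      simp only []
      rw [mul_assoc, ← pow_succ']
      congr 1
      rw [← Real.exp_nat_mul]
      congr 1
      push_cast
      ring
    rw [key, ← hgroup ((i : ℕ) + 1 : ℝ) ]
    exact hF _ (by positivity)
  have hbδ : b δ * f (e ⟨δ, hδ⟩) = 0 := by
    have := congrFun hvzero (e ⟨δ, hδ⟩)
    simpa [hv, Equiv.symm_apply_apply] using this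
  rcases mul_eq_zero.mp hbδ with h | h
  · exact h
  · exact absurd h (Real.exp_pos _).ne'

lemma energy_form {p n : ℕ} (x : Fin n → EuclideanSpace ℝ (Fin p))
    (hx : Function.Injective x) (a : Fin n → ℝ) (ha : ∑ i, a i = 0) :
    ∑ i, ∑ j, a i * a j * ‖x i - x j‖ ≤ 0 ∧
    ((∑ i, ∑ j, a i * a j * ‖x i - x j‖) = 0 ↔ a = 0) := by
  classical
  set Q : ℝ := ∑ i, ∑ j, a i * a j * ‖x i - x j‖ with hQ
  set g : ℝ → ℝ := fun s => s ^ (-(3:ℝ)/2) with hg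
  set F : ℝ → ℝ := fun s => ∑ i, ∑ j, a i * a j * Real.exp (-(s * ‖x i - x j‖ ^ 2)) with hF
  -- pointwise identity on Ioi 0
  have eq2 : ∀ s : ℝ, ∑ i, ∑ j, a i * a j * ((1 - Real.exp (-(s * ‖x i - x j‖ ^ 2))) * g s)
      = -(F s * g s) := by
    intro s
    have expand : ∀ i j : Fin n, a i * a j * ((1 - Real.exp (-(s * ‖x i - x j‖ ^ 2))) * g s)
        = a i * (a j * g s) - a i * a j * Real.exp (-(s * ‖x i - x j‖ ^ 2)) * g s := by
      intro i j; ring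
    simp only [expand, Finset.sum_sub_distrib]
    have h1 : ∑ i, ∑ j, a i * (a j * g s) = 0 := by
      simp only [← Finset.mul_sum, ← Finset.sum_mul, ha]
      simp
    have h2 : ∑ i, ∑ j, a i * a j * Real.exp (-(s * ‖x i - x j‖ ^ 2)) * g s = F s * g s := by
      rw [hF]
      simp only [Finset.sum_mul]
    rw [h1, h2, zero_sub]
  -- each summand integrable on Ioi 0
  have hInt : ∀ i j : Fin n, IntegrableOn
      (fun s : ℝ => a i * a j * ((1 - Real.exp (-(s * ‖x i - x j‖ ^ 2))) * g s)) (Ioi 0) :=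
    fun i j => ((rep (norm_nonneg (x i - x j))).1.const_mul _)
  have hIntSum : IntegrableOn
      (fun s : ℝ => ∑ i, ∑ j, a i * a j * ((1 - Real.exp (-(s * ‖x i - x j‖ ^ 2))) * g s))
      (Ioi 0) :=
    integrable_finset_sum _ (fun i _ => integrable_finset_sum _ (fun j _ => hInt i j))
  have key : aE * Q = -∫ s in Ioi (0:ℝ), F s * g s := by
    have lhs : ∫ s in Ioi (0:ℝ),
        (∑ i, ∑ j, a i * a j * ((1 - Real.exp (-(s * ‖x i - x j‖ ^ 2))) * g s)) = aE * Q := by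
      rw [integral_finset_sum _ (fun i _ => integrable_finset_sum _ (fun j _ => hInt i j))]
      have : ∀ i : Fin n,
          ∫ s in Ioi (0:ℝ), ∑ j, a i * a j * ((1 - Real.exp (-(s * ‖x i - x j‖ ^ 2))) * g s)
          = ∑ j, a i * a j * (aE * ‖x i - x j‖) := by
        intro i
        rw [integral_finset_sum _ (fun j _ => hInt i j)]
        refine Finset.sum_congr rfl fun j _ => ?_
        rw [integral_const_mul, (rep (norm_nonneg (x i - x j))).2]
      simp only [this]
      rw [hQ, Finset.mul_sum]
      refine Finset.sum_congr rfl fun i _ => ?_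
      rw [Finset.mul_sum]
      refine Finset.sum_congr rfl fun j _ => ?_
      ring
    rw [← lhs, ← integral_neg]
    exact setIntegral_congr_fun measurableSet_Ioi fun s _ => eq2 s
  have hFnn : ∀ s : ℝ, s ∈ Ioi (0:ℝ) → 0 ≤ F s * g s := by
    intro s hs
    exact mul_nonneg (gauss_pd x a (le_of_lt hs)) (Real.rpow_nonneg (le_of_lt hs) _)
  have hIntFg : IntegrableOn (fun s : ℝ => F s * g s) (Ioi 0) := by
    have h1 : Integrable
        (fun s : ℝ => -(∑ i, ∑ j, a i * a j * ((1 - Real.exp (-(s * ‖x i - x j‖ ^ 2))) * g s)))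
        (volume.restrict (Ioi 0)) := hIntSum.neg
    refine h1.congr ?_
    filter_upwards [ae_restrict_mem measurableSet_Ioi] with s _
    rw [eq2 s, neg_neg]
  have hpos : 0 ≤ ∫ s in Ioi (0:ℝ), F s * g s :=
    setIntegral_nonneg measurableSet_Ioi hFnn
  have hQle : Q ≤ 0 := by nlinarith [aE_pos]
  refine ⟨hQle, ?_, ?_⟩
  · -- Q = 0 → a = 0
    intro hQ0
    have hint0 : ∫ s in Ioi (0:ℝ), F s * g s = 0 := by
      rw [hQ0, mul_zero] at key
      linarith
    have hae : (fun s => F s * g s) =ᵐ[volume.restrict (Ioi (0:ℝ))] 0 := by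
      rw [← integral_eq_zero_iff_of_nonneg_ae ?_ hIntFg]
      · exact hint0
      · filter_upwards [ae_restrict_mem measurableSet_Ioi] with s hs using hFnn s hs
    -- F vanishes on Ioi 0
    have hFcont : Continuous F := by
      rw [hF]
      exact continuous_finset_sum _ fun i _ => continuous_finset_sum _ fun j _ =>
        continuous_const.mul (Real.continuous_exp.comp (continuous_id.mul continuous_const).neg)
    have hF0 : ∀ s : ℝ, 0 < s → F s = 0 := by
      by_contra hcon
      push_neg at hcon
      obtain ⟨s₀, hs₀, hFs₀⟩ := hcon
      set U : Set ℝ := {s | F s ≠ 0} ∩ Ioi 0 with hU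
      have hUopen : IsOpen U :=
        ((isOpen_compl_singleton.preimage hFcont)).inter isOpen_Ioi
      have hUne : U.Nonempty := ⟨s₀, hFs₀, hs₀⟩
      have hUpos : (0:ℝ≥0∞) < volume U := hUopen.measure_pos volume hUne
      have hnull : volume.restrict (Ioi (0:ℝ)) {s | F s * g s ≠ 0} = 0 := by
        have := hae
        rw [Filter.EventuallyEq, ae_iff] at this
        simpa using this
      have hsub : U ⊆ {s | F s * g s ≠ 0} := by
        intro s hs
        rcases hs with ⟨hFs, hs0⟩
        have hgs : g s ≠ 0 := (Real.rpow_pos_of_pos hs0 _).ne'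
        exact mul_ne_zero hFs hgs
      have : volume.restrict (Ioi (0:ℝ)) U = 0 :=
        measure_mono_null hsub hnull
      rw [Measure.restrict_apply hUopen.measurableSet] at this
      have hUsub : U ∩ Ioi 0 = U :=
        inter_eq_left.mpr (by rw [hU]; exact inter_subset_right)
      rw [hUsub] at this
      exact hUpos.ne' this
    -- Vandermonde step
    rcases Nat.eq_zero_or_pos n with hn | hn
    · subst hn; exact funext fun i => absurd i.2 (by simp)
    have hFsum : ∀ s : ℝ, 0 < s →
        ∑ q : Fin n × Fin n, (a q.1 * a q.2) * Real.exp (-(s * ‖x q.1 - x q.2‖ ^ 2)) = 0 := by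
      intro s hs
      rw [Fintype.sum_prod_type]
      exact hF0 s hs
    have hdiag := exp_vanish (fun q : Fin n × Fin n => ‖x q.1 - x q.2‖ ^ 2)
      (fun q => a q.1 * a q.2) hFsum 0
    have hfilter : (univ.filter (fun q : Fin n × Fin n => ‖x q.1 - x q.2‖ ^ 2 = 0))
        = univ.filter (fun q : Fin n × Fin n => q.1 = q.2) := by
      refine Finset.filter_congr fun q _ => ?_
      constructor
      · intro h
        have : x q.1 - x q.2 = 0 := by
          have := pow_eq_zero_iff (n := 2) (by norm_num) |>.mp h
          exact norm_eq_zero.mp this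
        exact hx (sub_eq_zero.mp this)
      · intro h; rw [h]; simp
    rw [hfilter] at hdiag
    have hdiag2 : ∑ i : Fin n, a i * a i = 0 := by
      rw [← hdiag]
      rw [Finset.sum_filter, Fintype.sum_prod_type]
      refine Finset.sum_congr rfl fun i _ => ?_
      rw [Finset.sum_ite_eq Finset.univ i (fun j => a i * a j)]
      simp
    have hzero : ∀ i : Fin n, a i * a i = 0 := by
      intro i
      have hnn : ∀ i ∈ (Finset.univ : Finset (Fin n)), 0 ≤ a i * a i :=
        fun i _ => mul_self_nonneg _
      exact (Finset.sum_eq_zero_iff_of_nonneg hnn).mp hdiag2 i (mem_univ i)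
    exact funext fun i => mul_self_eq_zero.mp (hzero i)
  · intro ha0
    rw [hQ, ha0]
    simp

lemma sum_comp_eq {α β M : Type*} [AddCommMonoid M] [DecidableEq β] [Fintype α] (f : α → β)
    (S : Finset β) (hS : ∀ i, f i ∈ S) (F : β → M) :
    ∑ i, F (f i) = ∑ z ∈ S, ((Finset.univ.filter fun i => f i = z).card) • F z := by
  rw [← Finset.sum_fiberwise_of_maps_to (fun i _ => hS i) (fun i => F (f i))]
  refine Finset.sum_congr rfl fun z _ => ?_
  rw [Finset.sum_congr rfl (fun i hi => by rw [(Finset.mem_filter.mp hi).2]),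
    Finset.sum_const]

/-- The empirical-measure squared MMD with the energy (negative Euclidean
distance) kernel between finite scenario sets `{ζ₁,…,ζ_K}` and `{ω₁,…,ω_M}` in `ℝ^p`,
`(2/(KM)) ∑_{i,j} ‖ζᵢ − ω_j‖ − (1/K²) ∑_{i,i'} ‖ζᵢ − ζᵢ'‖ − (1/M²) ∑_{j,j'} ‖ω_j − ω_{j'}‖`,
is nonnegative, and it vanishes iff the two empirical measures coincide. -/
theorem stmt_11 (p K M : ℕ) (hK : 0 < K) (hM : 0 < M)
    (ζ : Fin K → EuclideanSpace ℝ (Fin p)) (ω : Fin M → EuclideanSpace ℝ (Fin p))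
    (d : ℝ)
    (hd : d = (2 / ((K : ℝ) * (M : ℝ))) * ∑ i : Fin K, ∑ j : Fin M, ‖ζ i - ω j‖
      - ((K : ℝ) ^ 2)⁻¹ * ∑ i : Fin K, ∑ i' : Fin K, ‖ζ i - ζ i'‖
      - ((M : ℝ) ^ 2)⁻¹ * ∑ j : Fin M, ∑ j' : Fin M, ‖ω j - ω j'‖) :
    0 ≤ d ∧ (d = 0 ↔
      ((K : ENNReal)⁻¹ • ∑ i : Fin K, Measure.dirac (ζ i) : Measure (EuclideanSpace ℝ (Fin p)))
        = (M : ENNReal)⁻¹ • ∑ j : Fin M, Measure.dirac (ω j)) := by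
  classical
  set S : Finset (EuclideanSpace ℝ (Fin p)) :=
    (Finset.univ.image ζ) ∪ (Finset.univ.image ω) with hSdef
  have hζS : ∀ i, ζ i ∈ S := fun i =>
    Finset.mem_union_left _ (Finset.mem_image_of_mem ζ (Finset.mem_univ i))
  have hωS : ∀ j, ω j ∈ S := fun j =>
    Finset.mem_union_right _ (Finset.mem_image_of_mem ω (Finset.mem_univ j))
  set Nζ : EuclideanSpace ℝ (Fin p) → ℕ :=
    fun z => (Finset.univ.filter fun i => ζ i = z).card with hNζ
  set Nω : EuclideanSpace ℝ (Fin p) → ℕ :=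
    fun z => (Finset.univ.filter fun j => ω j = z).card with hNω
  -- grouping of the three double sums
  have hgA : ∑ i, ∑ j, ‖ζ i - ω j‖
      = ∑ z ∈ S, ∑ w ∈ S, (Nζ z : ℝ) * (Nω w : ℝ) * ‖z - w‖ := by
    rw [sum_comp_eq ζ S hζS (fun z => ∑ j, ‖z - ω j‖)]
    refine Finset.sum_congr rfl fun z _ => ?_
    rw [sum_comp_eq ω S hωS (fun w => ‖z - w‖), Finset.smul_sum]
    refine Finset.sum_congr rfl fun w _ => ?_
    rw [nsmul_eq_mul, nsmul_eq_mul]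
    ring
  have hgB : ∑ i, ∑ j, ‖ζ i - ζ j‖
      = ∑ z ∈ S, ∑ w ∈ S, (Nζ z : ℝ) * (Nζ w : ℝ) * ‖z - w‖ := by
    rw [sum_comp_eq ζ S hζS (fun z => ∑ j, ‖z - ζ j‖)]
    refine Finset.sum_congr rfl fun z _ => ?_
    rw [sum_comp_eq ζ S hζS (fun w => ‖z - w‖), Finset.smul_sum]
    refine Finset.sum_congr rfl fun w _ => ?_
    rw [nsmul_eq_mul, nsmul_eq_mul]
    ring
  have hgC : ∑ i, ∑ j, ‖ω i - ω j‖
      = ∑ z ∈ S, ∑ w ∈ S, (Nω z : ℝ) * (Nω w : ℝ) * ‖z - w‖ := by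
    rw [sum_comp_eq ω S hωS (fun z => ∑ j, ‖z - ω j‖)]
    refine Finset.sum_congr rfl fun z _ => ?_
    rw [sum_comp_eq ω S hωS (fun w => ‖z - w‖), Finset.smul_sum]
    refine Finset.sum_congr rfl fun w _ => ?_
    rw [nsmul_eq_mul, nsmul_eq_mul]
    ring
  set aS : EuclideanSpace ℝ (Fin p) → ℝ :=
    fun z => (Nζ z : ℝ) / K - (Nω z : ℝ) / M with haS
  have hKR : (K:ℝ) ≠ 0 := Nat.cast_ne_zero.mpr hK.ne'
  have hMR : (M:ℝ) ≠ 0 := Nat.cast_ne_zero.mpr hM.ne'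
  -- d = -(quadratic form of aS)
  have hdQ : d = -(∑ z ∈ S, ∑ w ∈ S, aS z * aS w * ‖z - w‖) := by
    have expand : ∀ z w : EuclideanSpace ℝ (Fin p), aS z * aS w * ‖z - w‖
        = (1/((K:ℝ)*K)) * ((Nζ z : ℝ) * Nζ w * ‖z - w‖)
          - (1/((K:ℝ)*M)) * ((Nζ z : ℝ) * Nω w * ‖z - w‖)
          - (1/((K:ℝ)*M)) * ((Nω z : ℝ) * Nζ w * ‖z - w‖)
          + (1/((M:ℝ)*M)) * ((Nω z : ℝ) * Nω w * ‖z - w‖) := by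
      intro z w
      rw [haS]
      field_simp
      ring
    have hA' : ∑ z ∈ S, ∑ w ∈ S, (Nω z : ℝ) * Nζ w * ‖z - w‖
        = ∑ z ∈ S, ∑ w ∈ S, (Nζ z : ℝ) * Nω w * ‖z - w‖ := by
      rw [Finset.sum_comm]
      refine Finset.sum_congr rfl fun z _ => Finset.sum_congr rfl fun w _ => ?_
      rw [norm_sub_rev]
      ring
    simp only [expand, Finset.sum_add_distrib, Finset.sum_sub_distrib, ← Finset.mul_sum]
    rw [hA', hd, hgA, hgB, hgC]
    ring
  -- the quadratic form, in enumerated variables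
  set n := S.card with hn
  set e := S.equivFin with he
  set x : Fin n → EuclideanSpace ℝ (Fin p) := fun k => (e.symm k : EuclideanSpace ℝ (Fin p))
    with hx
  have hxinj : Function.Injective x :=
    fun k₁ k₂ h => e.symm.injective (Subtype.ext h)
  set aa : Fin n → ℝ := fun k => aS (x k) with haa
  have hsum_eq : ∀ f : EuclideanSpace ℝ (Fin p) → ℝ, ∑ z ∈ S, f z = ∑ k, f (x k) := by
    intro f
    rw [← Finset.sum_coe_sort S f, ← Equiv.sum_comp e.symm (fun r : {r // r ∈ S} => f r)]
  have hxS : ∀ k, x k ∈ S := fun k => (e.symm k).2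
  -- total mass identities
  have hNζsum : ∑ z ∈ S, (Nζ z : ℝ) = K := by
    have := sum_comp_eq ζ S hζS (fun _ => (1:ℝ))
    simp only [smul_eq_mul, mul_one, Finset.sum_const, nsmul_eq_mul] at this ⊢
    rw [hNζ]
    simpa using this.symm
  have hNωsum : ∑ z ∈ S, (Nω z : ℝ) = M := by
    have := sum_comp_eq ω S hωS (fun _ => (1:ℝ))
    simp only [smul_eq_mul, mul_one, Finset.sum_const, nsmul_eq_mul] at this ⊢
    rw [hNω]
    simpa using this.symm
  have haa0 : ∑ k, aa k = 0 := by
    rw [← hsum_eq aS, haS]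
    simp only []
    rw [Finset.sum_sub_distrib, ← Finset.sum_div, ← Finset.sum_div, hNζsum, hNωsum]
    field_simp
    simp
  have hQQ : ∑ z ∈ S, ∑ w ∈ S, aS z * aS w * ‖z - w‖
      = ∑ i, ∑ j, aa i * aa j * ‖x i - x j‖ := by
    rw [hsum_eq (fun z => ∑ w ∈ S, aS z * aS w * ‖z - w‖)]
    refine Finset.sum_congr rfl fun i _ => ?_
    exact hsum_eq (fun w => aS (x i) * aS w * ‖x i - w‖)
  obtain ⟨hle, hiff⟩ := energy_form x hxinj aa haa0
  constructor
  · rw [hdQ, hQQ]; linarith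
  · rw [hdQ, hQQ, neg_eq_zero, hiff]
    have hKE0 : (K:ℝ≥0∞) ≠ 0 := Nat.cast_ne_zero.mpr hK.ne'
    have hKEt : (K:ℝ≥0∞) ≠ ⊤ := ENNReal.natCast_ne_top K
    have hME0 : (M:ℝ≥0∞) ≠ 0 := Nat.cast_ne_zero.mpr hM.ne'
    have hMEt : (M:ℝ≥0∞) ≠ ⊤ := ENNReal.natCast_ne_top M
    have haSiff : (aa = 0) ↔ ∀ z ∈ S, aS z = 0 := by
      constructor
      · intro h z hz
        have := congrFun h (e ⟨z, hz⟩)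
        simpa [haa, hx, Equiv.symm_apply_apply] using this
      · intro h
        funext k
        exact h (x k) (hxS k)
    have hcross : ∀ z, aS z = 0 ↔ M * Nζ z = K * Nω z := by
      intro z
      rw [haS]
      simp only []
      constructor
      · intro h
        have h2 : (Nζ z : ℝ) * M = (Nω z : ℝ) * K := by
          field_simp at h
          linarith
        have : ((M * Nζ z : ℕ) : ℝ) = ((K * Nω z : ℕ) : ℝ) := by
          push_cast
          linarith
        exact_mod_cast this
      · intro h
        have h2 : ((M * Nζ z : ℕ) : ℝ) = ((K * Nω z : ℕ) : ℝ) := by exact_mod_cast h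
        push_cast at h2
        field_simp
        linarith
    have hENN : ∀ z, M * Nζ z = K * Nω z ↔
        ((K:ℝ≥0∞)⁻¹ * Nζ z = (M:ℝ≥0∞)⁻¹ * Nω z) := by
      intro z
      constructor
      · intro h
        have hE : (M:ℝ≥0∞) * Nζ z = (K:ℝ≥0∞) * Nω z := by exact_mod_cast h
        calc (K:ℝ≥0∞)⁻¹ * Nζ z = (K:ℝ≥0∞)⁻¹ * ((M:ℝ≥0∞)⁻¹ * ((M:ℝ≥0∞) * Nζ z)) := by
              rw [← mul_assoc ((M:ℝ≥0∞)⁻¹), ENNReal.inv_mul_cancel hME0 hMEt, one_mul]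
          _ = (M:ℝ≥0∞)⁻¹ * ((K:ℝ≥0∞)⁻¹ * ((K:ℝ≥0∞) * Nω z)) := by rw [hE]; ring
          _ = (M:ℝ≥0∞)⁻¹ * Nω z := by
              rw [← mul_assoc ((K:ℝ≥0∞)⁻¹), ENNReal.inv_mul_cancel hKE0 hKEt, one_mul]
      · intro h
        have hE : (M:ℝ≥0∞) * Nζ z = (K:ℝ≥0∞) * Nω z := by
          calc (M:ℝ≥0∞) * Nζ z = (M:ℝ≥0∞) * ((K:ℝ≥0∞) * ((K:ℝ≥0∞)⁻¹ * Nζ z)) := by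
                rw [← mul_assoc ((K:ℝ≥0∞)), ENNReal.mul_inv_cancel hKE0 hKEt, one_mul]
            _ = (K:ℝ≥0∞) * ((M:ℝ≥0∞) * ((M:ℝ≥0∞)⁻¹ * Nω z)) := by rw [h]; ring
            _ = (K:ℝ≥0∞) * Nω z := by
                rw [← mul_assoc ((M:ℝ≥0∞)), ENNReal.mul_inv_cancel hME0 hMEt, one_mul]
        exact_mod_cast hE
    have hζapp : ∀ (A : Set (EuclideanSpace ℝ (Fin p))), MeasurableSet A →
        (∑ i, Measure.dirac (ζ i)) A
          = ∑ z ∈ S, (Nζ z : ℝ≥0∞) * A.indicator (fun _ => (1:ℝ≥0∞)) z := by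
      intro A hA
      rw [Measure.finset_sum_apply]
      have hpt : ∀ i, Measure.dirac (ζ i) A = A.indicator (fun _ => (1:ℝ≥0∞)) (ζ i) := by
        intro i
        rw [Measure.dirac_apply' _ hA]
        rfl
      simp only [hpt]
      rw [sum_comp_eq ζ S hζS (fun z => A.indicator (fun _ => (1:ℝ≥0∞)) z)]
      exact Finset.sum_congr rfl fun z _ => by rw [nsmul_eq_mul]
    have hωapp : ∀ (A : Set (EuclideanSpace ℝ (Fin p))), MeasurableSet A →
        (∑ j, Measure.dirac (ω j)) A
          = ∑ z ∈ S, (Nω z : ℝ≥0∞) * A.indicator (fun _ => (1:ℝ≥0∞)) z := by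
      intro A hA
      rw [Measure.finset_sum_apply]
      have hpt : ∀ j, Measure.dirac (ω j) A = A.indicator (fun _ => (1:ℝ≥0∞)) (ω j) := by
        intro j
        rw [Measure.dirac_apply' _ hA]
        rfl
      simp only [hpt]
      rw [sum_comp_eq ω S hωS (fun z => A.indicator (fun _ => (1:ℝ≥0∞)) z)]
      exact Finset.sum_congr rfl fun z _ => by rw [nsmul_eq_mul]
    constructor
    · intro h0
      have hptwise : ∀ z ∈ S, (K:ℝ≥0∞)⁻¹ * Nζ z = (M:ℝ≥0∞)⁻¹ * Nω z :=
        fun z hz => (hENN z).mp ((hcross z).mp (haSiff.mp h0 z hz))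
      ext A hA
      rw [Measure.smul_apply, Measure.smul_apply, smul_eq_mul, smul_eq_mul,
        hζapp A hA, hωapp A hA, Finset.mul_sum, Finset.mul_sum]
      refine Finset.sum_congr rfl fun z hz => ?_
      rw [← mul_assoc, ← mul_assoc, hptwise z hz]
    · intro hμ
      refine haSiff.mpr fun z hz => ?_
      have happ := congrArg (fun μ : Measure (EuclideanSpace ℝ (Fin p)) => μ {z}) hμ
      simp only [Measure.smul_apply, smul_eq_mul] at happ
      rw [hζapp {z} (measurableSet_singleton z), hωapp {z} (measurableSet_singleton z)] at happ
      have hind : ∀ N : EuclideanSpace ℝ (Fin p) → ℕ,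
          ∑ w ∈ S, (N w : ℝ≥0∞) * ({z} : Set (EuclideanSpace ℝ (Fin p))).indicator
            (fun _ => (1:ℝ≥0∞)) w = (N z : ℝ≥0∞) := by
        intro N
        have : ∀ w ∈ S, (N w : ℝ≥0∞) * ({z} : Set (EuclideanSpace ℝ (Fin p))).indicator
            (fun _ => (1:ℝ≥0∞)) w = if w = z then (N w : ℝ≥0∞) else 0 := by
          intro w _
          rw [Set.indicator_apply]
          simp [Set.mem_singleton_iff]
        rw [Finset.sum_congr rfl this, Finset.sum_ite_eq' S z (fun w => (N w : ℝ≥0∞))]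
        simp [hz]
      rw [hind Nζ, hind Nω] at happ
      exact (hcross z).mpr ((hENN z).mpr happ)

end EnergyAux
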